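/- Let Z(r) = coth r − 1/r for r > 0. Then for all r > 0, r² Z''(r) + r Z'(r) − Z(r) ≤ 0. -/

import Mathlib

noncomputable def Z : ℝ → ℝ := fun r => Real.cosh r / Real.sinh r - 1 / r

open Real

lemma mono_aux {f f' : ℝ → ℝ} (hf : ∀ x, HasDerivAt f (f' x) x)
    (h0 : ∀ x, 0 ≤ x → 0 ≤ f' x) {x : ℝ} (hx : 0 ≤ x) : f 0 ≤ f x := by
  have hm : MonotoneOn f (Set.Ici 0) := by
    apply monotoneOn_of_deriv_nonneg (convex_Ici 0)
      (fun y _ => ((hf y).continuousAt).continuousWithinAt)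
      (fun y _ => ((hf y).differentiableAt).differentiableWithinAt)
    intro y hy
    rw [interior_Ici, Set.mem_Ioi] at hy
    rw [(hf y).deriv]
    exact h0 y hy.le
  exact hm (Set.self_mem_Ici) hx hx

lemma L3 {x : ℝ} (hx : 0 ≤ x) : sinh x ≤ x * cosh x := by
  have := mono_aux (f := fun x => x * cosh x - sinh x) (f' := fun x => x * sinh x)
    (fun y => by
      have h := ((hasDerivAt_id y).mul (Real.hasDerivAt_cosh y)).sub (Real.hasDerivAt_sinh y)
      refine h.congr_deriv ?_
      simp only [id_eq]
      ring)
    (fun y hy => mul_nonneg hy (Real.sinh_nonneg_iff.mpr hy)) hx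
  norm_num at this
  linarith

lemma L1 {x : ℝ} (hx : 0 ≤ x) : 1 + x ^ 2 / 2 ≤ cosh x := by
  have := mono_aux (f := fun x => cosh x - 1 - x ^ 2 / 2) (f' := fun x => sinh x - x)
    (fun y => by
      have h := ((Real.hasDerivAt_cosh y).sub_const 1).sub
        ((hasDerivAt_pow 2 y).div_const 2)
      refine h.congr_deriv ?_
      norm_num)
    (fun y hy => by
      have := Real.self_le_sinh_iff.mpr hy
      linarith) hx
  norm_num at this
  linarith

lemma L2 {x : ℝ} (hx : 0 ≤ x) : x + x ^ 3 / 6 ≤ sinh x := by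
  have := mono_aux (f := fun x => sinh x - x - x ^ 3 / 6)
    (f' := fun x => cosh x - 1 - x ^ 2 / 2)
    (fun y => by
      have h := (((Real.hasDerivAt_sinh y).sub (hasDerivAt_id y)).sub
        ((hasDerivAt_pow 3 y).div_const 6))
      refine h.congr_deriv ?_
      simp only [id_eq, Nat.cast_ofNat]
      norm_num
      ring)
    (fun y hy => by have := L1 hy; linarith) hx
  norm_num at this
  linarith

lemma L4 {x : ℝ} (hx : 0 ≤ x) : x * cosh x - sinh x ≤ x ^ 3 * cosh x / 3 := by
  have := mono_aux (f := fun x => x ^ 3 * cosh x / 3 - x * cosh x + sinh x)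
    (f' := fun x => x ^ 2 * cosh x - x * sinh x + x ^ 3 * sinh x / 3)
    (fun y => by
      have h := (((((hasDerivAt_pow 3 y).mul (Real.hasDerivAt_cosh y)).div_const 3).sub
        ((hasDerivAt_id y).mul (Real.hasDerivAt_cosh y)))).add (Real.hasDerivAt_sinh y)
      refine h.congr_deriv ?_
      simp only [id_eq, Nat.cast_ofNat]
      norm_num
      ring)
    (fun y hy => by
      have h3 := L3 hy
      have hc := Real.cosh_pos y
      have hs := Real.sinh_nonneg_iff.mpr hy
      nlinarith [mul_le_mul_of_nonneg_left h3 hy, mul_nonneg (mul_nonneg hy (mul_nonneg hy hy)) hs]) hx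
  norm_num at this
  linarith

theorem stmt_4 (r : ℝ) (hr : 0 < r) :
    r ^ 2 * deriv (deriv Z) r + r * deriv Z r - Z r ≤ 0 := by
  have hs : 0 < sinh r := Real.sinh_pos_iff.mpr hr
  have hcc : Real.cosh r * Real.cosh r = 1 + Real.sinh r * Real.sinh r := by
    nlinarith [Real.cosh_sq_sub_sinh_sq r]
  have hZ1 : ∀ x : ℝ, 0 < x →
      HasDerivAt Z ((sinh x * sinh x - cosh x * cosh x) / (sinh x) ^ 2 + 1 / x ^ 2) x := by
    intro x hx
    have hsx : sinh x ≠ 0 := (Real.sinh_pos_iff.mpr hx).ne'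
    have h1 : HasDerivAt (fun y : ℝ => cosh y / sinh y)
        ((sinh x * sinh x - cosh x * cosh x) / (sinh x) ^ 2) x :=
      (Real.hasDerivAt_cosh x).div (Real.hasDerivAt_sinh x) hsx
    have h2 : HasDerivAt (fun y : ℝ => 1 / y) (-(1 / x ^ 2)) x := by
      simpa only [one_div] using hasDerivAt_inv hx.ne'
    have h3 := h1.sub h2
    rw [sub_neg_eq_add] at h3
    exact h3
  set F : ℝ → ℝ := fun x => (sinh x * sinh x - cosh x * cosh x) / (sinh x) ^ 2 + 1 / x ^ 2
    with hF
  have hEq : deriv Z =ᶠ[nhds r] F := by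
    filter_upwards [eventually_gt_nhds hr] with x hx
    exact (hZ1 x hx).deriv
  have hd1 : deriv Z r = F r := (hZ1 r hr).deriv
  have hFeq : F = fun x => -((sinh x) ^ 2)⁻¹ + 1 / x ^ 2 := by
    funext y
    have h := Real.cosh_sq_sub_sinh_sq y
    have : sinh y * sinh y - cosh y * cosh y = -1 := by nlinarith
    rw [hF]
    simp only [this]
    ring
  have hZ2 : HasDerivAt F (2 * cosh r / (sinh r) ^ 3 - 2 / r ^ 3) r := by
    rw [hFeq]
    have hden : HasDerivAt (fun y : ℝ => (sinh y) ^ 2) (2 * sinh r * cosh r) r := by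
      have h := (Real.hasDerivAt_sinh r).pow 2
      refine h.congr_deriv ?_
      norm_num
    have h1 := (hden.inv (by positivity)).neg
    have h2 : HasDerivAt (fun y : ℝ => 1 / y ^ 2) (-2 / r ^ 3) r := by
      have h := (hasDerivAt_pow 2 r).inv (by positivity)
      simp only [one_div]
      refine h.congr_deriv ?_
      norm_num
      rw [div_eq_div_iff (by positivity) (by positivity)]
      ring
    have h3 := h1.add h2
    refine h3.congr_deriv ?_
    rw [div_sub_div _ _ (by positivity : ((sinh r)^3:ℝ) ≠ 0) (by positivity : (r^3:ℝ) ≠ 0)]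
    field_simp
    ring
  have hd2 : deriv (deriv Z) r = 2 * cosh r / (sinh r) ^ 3 - 2 / r ^ 3 := by
    rw [Filter.EventuallyEq.deriv_eq hEq]
    exact hZ2.deriv
  rw [hd1, hd2, hF]
  have hE : r ^ 2 * (2 * cosh r / (sinh r) ^ 3 - 2 / r ^ 3) +
      r * ((sinh r * sinh r - cosh r * cosh r) / (sinh r) ^ 2 + 1 / r ^ 2) - Z r
      = (2 * r ^ 2 * cosh r - r * sinh r - cosh r * (sinh r) ^ 2) / (sinh r) ^ 3 := by
    simp only [Z]
    rw [hcc]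
    field_simp
    ring
  rw [hE]
  apply div_nonpos_of_nonpos_of_nonneg _ (by positivity)
  have h2 := L2 hr.le
  have h4 := L4 hr.le
  have hc := Real.cosh_pos r
  have hsn : (0:ℝ) ≤ sinh r := hs.le
  have key1 : 0 ≤ cosh r * (sinh r - (r + r ^ 3 / 6)) * (sinh r + (r + r ^ 3 / 6)) :=
    mul_nonneg (mul_nonneg hc.le (by linarith)) (by positivity)
  have key2 : r * (r * cosh r - sinh r) ≤ r * (r ^ 3 * cosh r / 3) :=
    mul_le_mul_of_nonneg_left h4 hr.le
  nlinarith [key1, key2, mul_nonneg hc.le (pow_nonneg hr.le 6)]
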